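/- Let E be a separably closed field of characteristic p containing the finite field 𝔽_q with q = p^f elements. Let M be a finite-dimensional E-vector space and let φ : M → M be an additive map satisfying φ(a·m) = a^q·φ(m) for all a ∈ E and m ∈ M, and suppose that the E-linear span of the image of φ is all of M. Then: (i) M admits an E-basis consisting of vectors m with φ(m) = m (equivalently, the natural map E ⊗_{𝔽_q} M^{φ=1} → M is an isomorphism, where M^{φ=1} = {m ∈ M : φ(m) = m}); and (ii) the map m ↦ m − φ(m) from M to M is surjective. -/

import Mathlib

open Polynomial Module Submodule Finset

section FrobeniusDescent
set_option linter.unusedSectionVars false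
set_option linter.unusedVariables false
set_option maxHeartbeats 1000000
universe u
variable {p : ℕ} [Fact p.Prime] {f q : ℕ}
variable {E : Type*} [Field E] [IsSepClosed E] [CharP E p]


lemma frob_aux_qE (hf : 0 < f) (hq : q = p ^ f) : (q : E) = 0 := by
  subst hq; push_cast [CharP.cast_eq_zero E p]; exact zero_pow hf.ne'

lemma frob_aux_dXq (hf : 0 < f) (hq : q = p ^ f) : derivative (X ^ q : E[X]) = 0 := by
  rw [derivative_X_pow, show ((q : ℕ) : E) = 0 from frob_aux_qE hf hq, map_zero, zero_mul]

lemma frob_aux_root (hf : 0 < f) (hq : q = p ^ f) (a : E) : ∃ c : E, c - c ^ q = a := by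
  have hq2 : 2 ≤ q := by subst hq; exact Nat.one_lt_pow hf.ne' (Fact.out : p.Prime).one_lt
  set P : E[X] := C a + X ^ q - X with hP
  have hd : derivative P = -1 := by
    simp [hP, frob_aux_dXq hf hq]
  have hdeg : P.degree = q := by
    have h1 : (C a - X).degree < (X ^ q : E[X]).degree := by
      rw [degree_X_pow]
      refine lt_of_le_of_lt (degree_sub_le _ _) ?_
      refine max_lt ?_ ?_
      · exact lt_of_le_of_lt degree_C_le (by exact_mod_cast by omega)
      · rw [degree_X]; exact_mod_cast by omega
    calc P.degree = (X ^ q + (C a - X)).degree := by rw [hP]; ring_nf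
      _ = (X ^ q : E[X]).degree := degree_add_eq_left_of_degree_lt h1
      _ = q := degree_X_pow q
  have hsep : P.Separable := by
    unfold Polynomial.Separable
    rw [hd]
    exact (isCoprime_one_right (x := P)).neg_right
  obtain ⟨c, hc⟩ := IsSepClosed.exists_root P (by rw [hdeg]; exact_mod_cast by omega) hsep
  refine ⟨c, ?_⟩
  have := hc
  simp only [IsRoot, hP, eval_sub, eval_add, eval_C, eval_pow, eval_X] at this
  linear_combination -this

lemma frob_exists_nonzero_root (P : E[X]) (hd : derivative P = -1) (h0 : P.eval 0 = 0)
    (hne : P ≠ -X) : ∃ t : E, t ≠ 0 ∧ P.eval t = 0 := by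
  have hP0 : P ≠ 0 := by rintro rfl; simp at hd
  have hsep : P.Separable := by
    unfold Polynomial.Separable; rw [hd]; exact (isCoprime_one_right (x := P)).neg_right
  have hXdvd : X ∣ P := X_dvd_iff.mpr (by rw [coeff_zero_eq_eval_zero, h0])
  obtain ⟨R, hR⟩ := hXdvd
  have hRne : R ≠ 0 := by rintro rfl; simp at hR; exact hP0 hR
  have hRdeg : R.degree ≠ 0 := by
    intro hdeg
    have hRC : R = C (R.coeff 0) := eq_C_of_degree_le_zero hdeg.le
    have : derivative P = C (R.coeff 0) := by rw [hR, hRC]; simp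
    rw [hd] at this
    have hr : R.coeff 0 = -1 := by
      have := congrArg (fun Q => Polynomial.coeff Q 0) this
      simpa using this.symm
    apply hne
    rw [hR, hRC, hr]
    simp only [map_neg, map_one, mul_neg, mul_one]
  have hRsep : R.Separable := hsep.of_dvd ⟨X, by rw [hR]; ring⟩
  obtain ⟨t, ht⟩ := IsSepClosed.exists_root R hRdeg hRsep
  refine ⟨t, ?_, ?_⟩
  · rintro rfl
    have hXR : X ∣ R := X_dvd_iff.mpr (by rw [coeff_zero_eq_eval_zero]; exact ht)
    obtain ⟨S, hS⟩ := hXR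
    have : (X * X) ∣ P := ⟨S, by rw [hR, hS]; ring⟩
    exact Polynomial.not_isUnit_X (hsep.squarefree X this)
  · rw [hR, eval_mul, show eval t R = 0 from ht, mul_zero]

lemma frob_aux_poly (hf : 0 < f) (hq : q = p ^ f) (k : ℕ) (c' : ℕ → E)
    (hcex : ∃ j ≤ k - 1, c' j ≠ 0) :
    ∃ t : E, t ≠ 0 ∧ ∃ a : ℕ → E, a 0 = c' 0 * t ^ q ∧
      (∀ i, a (i + 1) = (a i) ^ q + c' (i + 1) * t ^ q) ∧ a (k - 1) = t := by
  have hq2 : 2 ≤ q := by subst hq; exact Nat.one_lt_pow hf.ne' (Fact.out : p.Prime).one_lt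
  have hqne : q ≠ 0 := by omega
  set A : ℕ → E[X] :=
    fun i => Nat.rec (C (c' 0) * X ^ q) (fun i Ai => Ai ^ q + C (c' (i + 1)) * X ^ q) i with hA
  have hA0 : A 0 = C (c' 0) * X ^ q := rfl
  have hAs : ∀ i, A (i + 1) = (A i) ^ q + C (c' (i + 1)) * X ^ q := fun i => rfl
  have hder : ∀ i, derivative (A i) = 0 := by
    intro i
    induction i with
    | zero => rw [hA0, derivative_C_mul, frob_aux_dXq hf hq, mul_zero]
    | succ i ih =>
      rw [hAs, derivative_add, derivative_C_mul, frob_aux_dXq hf hq, mul_zero,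
        derivative_pow, ih, mul_zero, zero_add]
  have hev0 : ∀ i, eval 0 (A i) = 0 := by
    intro i
    induction i with
    | zero => simp [hA0, zero_pow hqne]
    | succ i ih => simp [hAs, ih, zero_pow hqne]
  have hAne : ∀ i, (∃ j ≤ i, c' j ≠ 0) → A i ≠ 0 := by
    intro i
    induction i with
    | zero =>
      rintro ⟨j, hj, hcj⟩
      interval_cases j
      rw [hA0]
      exact mul_ne_zero (by simpa using hcj) (pow_ne_zero _ X_ne_zero)
    | succ i ih =>
      rintro ⟨j, hj, hcj⟩ hzero
      rw [hAs] at hzero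
      have heq : (A i) ^ q = -(C (c' (i + 1)) * X ^ q) := by linear_combination hzero
      by_cases hAi : A i = 0
      · rw [hAi, zero_pow hqne] at heq
        have hmz : C (c' (i + 1)) * X ^ q = 0 := by linear_combination heq
        have hc1 : c' (i + 1) = 0 := by
          rcases mul_eq_zero.mp hmz with h | h
          · exact C_eq_zero.mp h
          · exact absurd h (pow_ne_zero _ X_ne_zero)
        have hji : j ≤ i := by
          rcases Nat.lt_or_ge j (i + 1) with h | h
          · omega
          · exfalso; apply hcj; have : j = i + 1 := by omega
            rw [this, hc1]
        exact ih ⟨j, hji, hcj⟩ hAi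
      · have hc1 : c' (i + 1) ≠ 0 := by
          rintro h0
          rw [h0, map_zero, zero_mul, neg_zero] at heq
          exact pow_ne_zero q hAi heq
        have hdeg : q * (A i).natDegree = q := by
          have := congrArg natDegree heq
          rwa [natDegree_pow, natDegree_neg, natDegree_C_mul hc1, natDegree_X_pow] at this
        have hd1 : (A i).natDegree = 1 :=
          Nat.eq_of_mul_eq_mul_left (show 0 < q by omega)
            (show q * (A i).natDegree = q * 1 by rw [mul_one]; exact hdeg)
        have hlc : (A i).coeff 1 ≠ 0 := by
          have := mt leadingCoeff_eq_zero.mp hAi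
          rwa [leadingCoeff, hd1] at this
        have : (derivative (A i)).coeff 0 = (A i).coeff 1 := by
          rw [coeff_derivative]; push_cast; ring
        rw [hder i] at this
        exact hlc (by simpa using this.symm)
  have hAk : A (k - 1) ≠ 0 := hAne _ hcex
  set Pl : E[X] := A (k - 1) - X with hPl
  have hd : derivative Pl = -1 := by rw [hPl, derivative_sub, hder, derivative_X, zero_sub]
  have h0 : eval 0 Pl = 0 := by rw [hPl, eval_sub, hev0, eval_X, sub_zero]
  have hne : Pl ≠ -X := by
    intro h
    apply hAk
    have : A (k - 1) = Pl + X := by rw [hPl]; ring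
    rw [this, h]; ring
  obtain ⟨t, ht0, htr⟩ := frob_exists_nonzero_root Pl hd h0 hne
  refine ⟨t, ht0, fun i => eval t (A i), ?_, ?_, ?_⟩
  · show eval t (A 0) = _
    rw [hA0]; simp
  · intro i
    show eval t (A (i + 1)) = eval t (A i) ^ q + c' (i + 1) * t ^ q
    rw [hAs]; simp
  · show eval t (A (k - 1)) = t
    have h2 : eval t Pl = 0 := htr
    rw [hPl, eval_sub, eval_X] at h2
    linear_combination h2

variable {M : Type u} [AddCommGroup M] [Module E M] [FiniteDimensional E M]

lemma frob_aux_basis_indep (hf : 0 < f) (hq : q = p ^ f) (φ : M →+ M)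
    (hφ : ∀ (a : E) (m : M), φ (a • m) = a ^ q • φ m)
    (hspan : Submodule.span E (Set.range φ) = ⊤) :
    LinearIndependent E (⇑φ ∘ ⇑(Module.finBasis E M)) := by
  set b := Module.finBasis E M
  apply linearIndependent_of_top_le_span_of_card_eq_finrank
  · rw [← hspan]
    rw [Submodule.span_le]
    rintro _ ⟨x, rfl⟩
    have hx := b.sum_repr x
    rw [← hx, map_sum]
    refine Submodule.sum_mem _ fun i _ => ?_
    rw [hφ]
    exact Submodule.smul_mem _ _ (Submodule.subset_span ⟨i, rfl⟩)
  · simp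

lemma frob_aux_inj (hf : 0 < f) (hq : q = p ^ f) (φ : M →+ M)
    (hφ : ∀ (a : E) (m : M), φ (a • m) = a ^ q • φ m)
    (hspan : Submodule.span E (Set.range φ) = ⊤)
    (m : M) (h0 : φ m = 0) : m = 0 := by
  have hqne : q ≠ 0 := by subst hq; exact (pow_pos (Fact.out : p.Prime).pos f).ne'
  set b := Module.finBasis E M
  have hind := frob_aux_basis_indep hf hq φ hφ hspan
  have hx := b.sum_repr m
  have h2 : ∑ i, (b.repr m i) ^ q • (⇑φ ∘ ⇑b) i = 0 := by
    simp only [Function.comp_apply, ← hφ]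
    rw [← map_sum, hx, h0]
  have h3 := Fintype.linearIndependent_iff.mp hind _ h2
  rw [← hx]
  refine Finset.sum_eq_zero fun i _ => ?_
  rw [pow_eq_zero_iff hqne |>.mp (h3 i), zero_smul]

lemma frob_aux_flag (φ : M →+ M) (v : M) :
    ∀ N : ℕ, (∀ j < N, (⇑φ)^[j] v ∉ span E (Set.range fun i : Fin j => (⇑φ)^[(i : ℕ)] v)) →
      LinearIndependent E (fun i : Fin N => (⇑φ)^[(i : ℕ)] v) := by
  intro N
  induction N with
  | zero => intro _; exact linearIndependent_empty_type
  | succ N ih =>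
    intro h
    have hsn : (fun i : Fin (N + 1) => (⇑φ)^[(i : ℕ)] v)
        = Fin.snoc (fun i : Fin N => (⇑φ)^[(i : ℕ)] v) ((⇑φ)^[N] v) := by
      funext i
      refine Fin.lastCases ?_ (fun j => ?_) i
      · simp [Fin.snoc_last]
      · simp [Fin.snoc_castSucc]
    rw [hsn, linearIndependent_fin_snoc]
    exact ⟨ih fun j hj => h j (hj.trans (Nat.lt_succ_self N)), h N (Nat.lt_succ_self N)⟩

lemma frob_aux_combine (φ : M →+ M)
    (hφ : ∀ (a : E) (m : M), φ (a • m) = a ^ q • φ m)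
    (v : M) (k' : ℕ) (c : Fin (k' + 1) → E) (a : ℕ → E) (t : E)
    (hc : ∑ i : Fin (k' + 1), c i • (⇑φ)^[(i : ℕ)] v = (⇑φ)^[k' + 1] v)
    (ha0 : a 0 = c 0 * t ^ q)
    (has : ∀ i : Fin k', a ((i : ℕ) + 1) = (a (i : ℕ)) ^ q + c i.succ * t ^ q)
    (halast : a k' = t) :
    φ (∑ i : Fin (k' + 1), a (i : ℕ) • (⇑φ)^[(i : ℕ)] v)
      = ∑ i : Fin (k' + 1), a (i : ℕ) • (⇑φ)^[(i : ℕ)] v := by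
  have e1 : φ (∑ i : Fin (k' + 1), a (i : ℕ) • (⇑φ)^[(i : ℕ)] v)
      = ∑ i : Fin (k' + 1), (a (i : ℕ)) ^ q • (⇑φ)^[(i : ℕ) + 1] v := by
    rw [map_sum]
    refine Finset.sum_congr rfl fun i _ => ?_
    rw [hφ, Function.iterate_succ_apply' φ (i : ℕ) v]
  rw [e1, Fin.sum_univ_castSucc]
  simp only [Fin.coe_castSucc, Fin.val_last]
  rw [halast, ← hc, Finset.smul_sum]
  rw [Fin.sum_univ_succ (f := fun j : Fin (k' + 1) => t ^ q • (c j • (⇑φ)^[(j : ℕ)] v))]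
  rw [Fin.sum_univ_succ (f := fun j : Fin (k' + 1) => a (j : ℕ) • (⇑φ)^[(j : ℕ)] v)]
  simp only [Fin.val_zero, Fin.val_succ, Function.iterate_zero_apply]
  have habel : ∀ S1 T0 S2 : M, S1 + (T0 + S2) = T0 + (S1 + S2) := by intros; abel
  rw [habel, ← Finset.sum_add_distrib]
  congr 1
  · rw [smul_smul, ha0, mul_comm]
  · refine Finset.sum_congr rfl fun j _ => ?_
    rw [smul_smul, ← add_smul, has j, mul_comm (t ^ q)]

lemma frob_aux_fixed (hf : 0 < f) (hq : q = p ^ f) (φ : M →+ M)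
    (hφ : ∀ (a : E) (m : M), φ (a • m) = a ^ q • φ m)
    (hspan : Submodule.span E (Set.range φ) = ⊤) [Nontrivial M] :
    ∃ m : M, m ≠ 0 ∧ φ m = m := by
  classical
  have hqne : q ≠ 0 := by subst hq; exact (pow_pos (Fact.out : p.Prime).pos f).ne'
  obtain ⟨v, hv⟩ := exists_ne (0 : M)
  have hit : ∀ j : ℕ, (⇑φ)^[j] v ≠ 0 := by
    intro j
    induction j with
    | zero => exact hv
    | succ j ih =>
      rw [Function.iterate_succ_apply']
      exact fun h => ih (frob_aux_inj hf hq φ hφ hspan _ h)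
  set P : ℕ → Prop :=
    fun j => (⇑φ)^[j] v ∈ span E (Set.range fun i : Fin j => (⇑φ)^[(i : ℕ)] v) with hP
  have hex : ∃ j, P j := by
    by_contra h
    push_neg at h
    have := (frob_aux_flag (E := E) φ v (finrank E M + 1)
      (fun j _ => h j)).fintype_card_le_finrank
    simp at this
  have kpos : 0 < Nat.find hex := by
    rcases Nat.eq_zero_or_pos (Nat.find hex) with h | h
    · exfalso
      have hk0 := Nat.find_spec hex
      rw [h] at hk0
      simp only [hP, Function.iterate_zero_apply] at hk0
      rw [show (Set.range fun i : Fin 0 => (⇑φ)^[(i : ℕ)] v) = ∅ from Set.range_eq_empty _,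
        Submodule.span_empty, Submodule.mem_bot] at hk0
      exact hv hk0
    · exact h
  obtain ⟨k', hkk⟩ : ∃ k', Nat.find hex = k' + 1 := ⟨Nat.find hex - 1, by omega⟩
  have hk : P (k' + 1) := hkk ▸ Nat.find_spec hex
  have hmin : ∀ j < k' + 1, ¬ P j := fun j hj => Nat.find_min hex (hkk ▸ hj)
  have hindep : LinearIndependent E (fun i : Fin (k' + 1) => (⇑φ)^[(i : ℕ)] v) :=
    frob_aux_flag φ v (k' + 1) hmin
  obtain ⟨c, hc⟩ : ∃ c : Fin (k' + 1) → E,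
      ∑ i, c i • (⇑φ)^[(i : ℕ)] v = (⇑φ)^[k' + 1] v :=
    (mem_span_range_iff_exists_fun E).mp hk
  have hcne : ∃ i, c i ≠ 0 := by
    by_contra h
    push_neg at h
    apply hit (k' + 1)
    rw [← hc]
    exact Finset.sum_eq_zero fun i _ => by rw [h i, zero_smul]
  set c' : ℕ → E := fun i => if h : i < k' + 1 then c ⟨i, h⟩ else 0 with hc'def
  have hc'eq : ∀ i : Fin (k' + 1), c' (i : ℕ) = c i := by
    intro i
    simp only [hc'def, i.isLt, dif_pos]
  have hcex : ∃ j ≤ (k' + 1) - 1, c' j ≠ 0 := by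
    obtain ⟨i, hi⟩ := hcne
    exact ⟨(i : ℕ), Nat.lt_succ_iff.mp i.isLt, by rw [hc'eq]; exact hi⟩
  obtain ⟨t, ht0, a, ha0, has, halast⟩ := frob_aux_poly hf hq (k' + 1) c' hcex
  refine ⟨∑ i : Fin (k' + 1), a (i : ℕ) • (⇑φ)^[(i : ℕ)] v, ?_, ?_⟩
  · intro h
    have h3 := Fintype.linearIndependent_iff.mp hindep _ h
    have := h3 (Fin.last k')
    rw [Fin.val_last] at this
    rw [show (k' + 1) - 1 = k' from rfl] at halast
    rw [this] at halast
    exact ht0 halast.symm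
  · refine frob_aux_combine φ hφ v k' c a t hc ?_ ?_ ?_
    · rw [← hc'eq 0, Fin.val_zero]; exact ha0
    · intro i
      have := has (i : ℕ)
      rwa [show c' ((i : ℕ) + 1) = c i.succ by rw [← hc'eq i.succ, Fin.val_succ]] at this
    · rw [show (k' + 1) - 1 = k' from rfl] at halast; exact halast


lemma frob_aux_span (hf : 0 < f) (hq : q = p ^ f) :
    ∀ (n : ℕ) (M : Type u) [AddCommGroup M] [Module E M] [FiniteDimensional E M]
      (φ : M →+ M), (∀ (a : E) (m : M), φ (a • m) = a ^ q • φ m) →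
      Submodule.span E (Set.range φ) = ⊤ → finrank E M = n →
      Submodule.span E {m : M | φ m = m} = ⊤ := by
  intro n
  induction n with
  | zero =>
    intro M _ _ _ φ hφ hspan hrank
    haveI : Subsingleton M := Module.finrank_zero_iff.mp hrank
    rw [eq_top_iff']
    intro m
    rw [Subsingleton.elim m 0]
    exact Submodule.zero_mem _
  | succ n ih =>
    intro M _ _ _ φ hφ hspan hrank
    haveI : Nontrivial M := Module.finrank_pos_iff.mp (by rw [hrank]; exact n.succ_pos)
    obtain ⟨m₀, hm0, hfix⟩ := frob_aux_fixed hf hq φ hφ hspan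
    haveI : ExpChar E p := ExpChar.prime (Fact.out : p.Prime)
    set σ := iterateFrobenius E p f with hσdef
    have hσ : ∀ a : E, σ a = a ^ q := fun a => by rw [hσdef, iterateFrobenius_def, hq]
    set φs : M →ₛₗ[σ] M :=
      { toFun := ⇑φ
        map_add' := φ.map_add
        map_smul' := fun a m => by simp only [RingHom.id_apply, hφ, hσ] } with hφsdef
    set W : Submodule E M := Submodule.span E {m₀} with hWdef
    have hWc : W ≤ W.comap φs := by
      rw [hWdef, Submodule.span_le, Set.singleton_subset_iff]
      show φs m₀ ∈ W
      show φ m₀ ∈ W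
      rw [hfix]
      exact Submodule.subset_span rfl
    set φq : M ⧸ W →ₛₗ[σ] M ⧸ W := Submodule.mapQ W W φs hWc with hφqdef
    have hφqmk : ∀ x : M, φq (Submodule.Quotient.mk x) = Submodule.Quotient.mk (φ x) :=
      fun x => Submodule.mapQ_apply W W φs x
    have hφq_smul : ∀ (a : E) (x : M ⧸ W), φq.toAddMonoidHom (a • x) = a ^ q • φq.toAddMonoidHom x := by
      intro a x
      show φq (a • x) = a ^ q • φq x
      rw [map_smulₛₗ, hσ]
    have hspanq : Submodule.span E (Set.range ⇑φq.toAddMonoidHom) = ⊤ := by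
      rw [eq_top_iff]
      calc (⊤ : Submodule E (M ⧸ W)) = Submodule.map W.mkQ ⊤ := by
            rw [Submodule.map_top, Submodule.range_mkQ]
        _ = Submodule.map W.mkQ (Submodule.span E (Set.range ⇑φ)) := by rw [hspan]
        _ = Submodule.span E (⇑W.mkQ '' Set.range ⇑φ) := Submodule.map_span _ _
        _ ≤ Submodule.span E (Set.range ⇑φq.toAddMonoidHom) := by
            refine Submodule.span_mono ?_
            rintro _ ⟨_, ⟨x, rfl⟩, rfl⟩
            exact ⟨W.mkQ x, (hφqmk x).symm⟩
    have hrankq : finrank E (M ⧸ W) = n := by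
      have h1 := Submodule.finrank_quotient_add_finrank W
      have h2 : finrank E W = 1 := finrank_span_singleton hm0
      omega
    have hspanfix := ih (M ⧸ W) φq.toAddMonoidHom hφq_smul hspanq hrankq
    set N : Submodule E M := Submodule.span E {m : M | φ m = m} with hNdef
    have hWN : W ≤ N := by
      rw [hWdef, hNdef]
      exact Submodule.span_mono (Set.singleton_subset_iff.mpr hfix)
    have hmap : Submodule.map W.mkQ N = ⊤ := by
      rw [eq_top_iff, ← hspanfix, Submodule.span_le]
      rintro xb (hxb : φq.toAddMonoidHom xb = xb)
      obtain ⟨x, rfl⟩ := Submodule.Quotient.mk_surjective W xb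
      have h1 : Submodule.Quotient.mk (p := W) (φ x) = Submodule.Quotient.mk x := by
        rw [← hφqmk x]; exact hxb
      have h2 : φ x - x ∈ W := (Submodule.Quotient.eq W).mp h1
      obtain ⟨d, hd⟩ := Submodule.mem_span_singleton.mp h2
      obtain ⟨cc, hcc⟩ := frob_aux_root hf hq d
      have hφx : φ x = x + d • m₀ := by rw [hd]; abel
      have hdc : d + cc ^ q = cc := by linear_combination -hcc
      have hyfix : φ (x + cc • m₀) = x + cc • m₀ := by
        calc φ (x + cc • m₀) = φ x + cc ^ q • m₀ := by rw [map_add, hφ, hfix]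
          _ = x + (d + cc ^ q) • m₀ := by rw [hφx, add_smul]; abel
          _ = x + cc • m₀ := by rw [hdc]
      refine ⟨x + cc • m₀, Submodule.subset_span hyfix, ?_⟩
      show Submodule.Quotient.mk (x + cc • m₀) = Submodule.Quotient.mk x
      rw [Submodule.Quotient.eq]
      have : (x + cc • m₀) - x = cc • m₀ := by abel
      rw [this]
      exact Submodule.smul_mem _ _ (Submodule.subset_span rfl)
    rw [eq_top_iff']
    intro m
    have hmm : W.mkQ m ∈ Submodule.map W.mkQ N := by rw [hmap]; trivial
    obtain ⟨y, hyN, hyx⟩ := hmm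
    have hmy : m - y ∈ W := (Submodule.Quotient.eq W).mp hyx.symm
    have : m = y + (m - y) := by abel
    rw [this]
    exact Submodule.add_mem _ hyN (hWN hmy)


end FrobeniusDescent

/-- Let `E` be a separably closed field of characteristic `p` containing
`𝔽_q` with `q = p^f`, `M` a finite-dimensional `E`-vector space, and `φ : M → M` an additive
map with `φ(a·m) = a^q·φ(m)` whose image spans `M` over `E`. Then `M` has an `E`-basis of
`φ`-fixed vectors, and `m ↦ m − φ(m)` is surjective. -/
theorem frobenius_semilinear_descent
    {p : ℕ} [Fact p.Prime] (f : ℕ) (hf : 0 < f) (q : ℕ) (hq : q = p ^ f)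
    (E : Type*) [Field E] [IsSepClosed E] [CharP E p] [Algebra (GaloisField p f) E]
    (M : Type*) [AddCommGroup M] [Module E M] [FiniteDimensional E M]
    (φ : M →+ M) (hφ : ∀ (a : E) (m : M), φ (a • m) = a ^ q • φ m)
    (hspan : Submodule.span E (Set.range φ) = ⊤) :
    (∃ b : Basis (Fin (Module.finrank E M)) E M, ∀ i, φ (b i) = b i) ∧
      Function.Surjective (fun m : M => m - φ m) := by
  classical
  have hspan2 : Submodule.span E {m : M | φ m = m} = ⊤ :=
    frob_aux_span hf hq (Module.finrank E M) M φ hφ hspan rfl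
  obtain ⟨s, hst, hspan_s, hind⟩ := exists_linearIndependent E {m : M | φ m = m}
  rw [hspan2] at hspan_s
  haveI : Fintype s := hind.setFinite.fintype
  let B : Basis s E M := Basis.mk hind (by rw [Subtype.range_coe, hspan_s])
  have hcard : Module.finrank E M = Fintype.card s := Module.finrank_eq_card_basis B
  let e : s ≃ Fin (Module.finrank E M) := Fintype.equivFinOfCardEq hcard.symm
  set b : Basis (Fin (Module.finrank E M)) E M := B.reindex e with hbdef
  have hbfix : ∀ i, φ (b i) = b i := by
    intro i
    rw [hbdef, Basis.reindex_apply, Basis.mk_apply]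
    exact hst (e.symm i).2
  refine ⟨⟨b, hbfix⟩, ?_⟩
  intro m
  choose cc hcc using fun i => frob_aux_root hf hq (b.repr m i)
  refine ⟨∑ i, cc i • b i, ?_⟩
  show (∑ i, cc i • b i) - φ (∑ i, cc i • b i) = m
  have h1 : φ (∑ i, cc i • b i) = ∑ i, (cc i) ^ q • b i := by
    rw [map_sum]
    exact Finset.sum_congr rfl fun i _ => by rw [hφ, hbfix i]
  rw [h1, ← Finset.sum_sub_distrib]
  have h2 : ∀ i, cc i • b i - (cc i) ^ q • b i = (b.repr m i) • b i :=
    fun i => by rw [← sub_smul, hcc i]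
  rw [Finset.sum_congr rfl fun i _ => h2 i, Basis.sum_repr]
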